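/- Let n ≥ 3 be odd and let A ∈ M_2(ℝ) satisfy A^n = −I and A ≠ −I. Then A^(n-1) − A^(n-2) + A^(n-3) − ... − A + I = 0. -/

import Mathlib

open Matrix Finset

private lemma ch2 (M : Matrix (Fin 2) (Fin 2) ℝ) :
    M * M = (Matrix.trace M) • M - (M.det) • (1 : Matrix (Fin 2) (Fin 2) ℝ) := by
  ext i j
  fin_cases i <;> fin_cases j <;>
    simp [Matrix.mul_apply, Fin.sum_univ_two, Matrix.trace_fin_two,
      Matrix.det_fin_two, Matrix.one_apply] <;> ring

theorem stmt_5 (n : ℕ) (hn : 3 ≤ n) (hodd : Odd n)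
    (A : Matrix (Fin 2) (Fin 2) ℝ) (h : A ^ n = -1) (hne : A ≠ -1) :
    ∑ j ∈ Finset.range n, ((-1 : ℝ) ^ j) • A ^ (n - 1 - j) = 0 := by
  set B : Matrix (Fin 2) (Fin 2) ℝ := A + 1 with hBdef
  have hBne : B ≠ 0 := by
    intro h0
    exact hne (by rw [eq_neg_of_add_eq_zero_left h0])
  have hA : A = B - 1 := by rw [hBdef]; abel
  -- B is invertible
  have hB : IsUnit B := by
    by_contra hB
    have hdet : B.det = 0 := by
      by_contra hd
      exact hB ((Matrix.isUnit_iff_isUnit_det B).2 (isUnit_iff_ne_zero.2 hd))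
    set c : ℝ := Matrix.trace B with hc
    have hB2 : B * B = c • B := by
      rw [ch2 B, hdet]; simp [hc]
    have hAB : A * B = (c - 1) • B := by
      rw [hA, sub_mul, one_mul, hB2, sub_smul, one_smul]
    have hAkB : ∀ k, A ^ k * B = ((c - 1) ^ k) • B := by
      intro k
      induction k with
      | zero => simp
      | succ k ih =>
        rw [pow_succ', mul_assoc, ih, Matrix.mul_smul, hAB, smul_smul, pow_succ',
          mul_comm ((c-1)^k)]
    have hn1 : ((c - 1) ^ n + 1) • B = 0 := by
      have h1 : A ^ n * B = -B := by rw [h]; simp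
      rw [hAkB n] at h1
      rw [add_smul, one_smul, h1]
      abel
    have hc0 : c = 0 := by
      rcases smul_eq_zero.1 hn1 with hsc | hB0
      · have heq : (c - 1) ^ n = (-1 : ℝ) ^ n := by
          rw [hodd.neg_one_pow]; linarith
        have h2 : c - 1 = -1 :=
          (Odd.strictMono_pow (R := ℝ) hodd).injective heq
        linarith
      · exact absurd hB0 hBne
    have hB20 : B * B = 0 := by rw [hB2, hc0, zero_smul]
    -- A ^ k = (-1)^k • 1 - ((-1)^k * k) • B
    have hAk : ∀ k : ℕ, A ^ k = ((-1 : ℝ) ^ k) • (1 : Matrix (Fin 2) (Fin 2) ℝ)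
        - (((-1 : ℝ) ^ k) * k) • B := by
      intro k
      induction k with
      | zero => simp
      | succ k ih =>
        rw [pow_succ', ih, hA]
        have expand : (B - 1) * (((-1 : ℝ) ^ k) • (1 : Matrix (Fin 2) (Fin 2) ℝ)
              - (((-1 : ℝ) ^ k) * k) • B)
            = ((-1 : ℝ) ^ k) • (B * 1) - (((-1 : ℝ) ^ k) * k) • (B * B)
              - (((-1 : ℝ) ^ k) • (1 * 1) - (((-1 : ℝ) ^ k) * k) • (1 * B)) := by
          rw [sub_mul, mul_sub, mul_sub, mul_smul_comm, mul_smul_comm,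
            mul_smul_comm, mul_smul_comm]
        rw [expand, hB20, smul_zero, mul_one, one_mul, one_mul]
        push_cast
        rw [show ((-1 : ℝ)) ^ (k + 1) = -((-1 : ℝ) ^ k) from by ring,
          show (-((-1 : ℝ) ^ k) * ((k : ℝ) + 1)) =
            (-(((-1 : ℝ) ^ k) * (k : ℝ))) - (-1 : ℝ) ^ k from by ring,
          neg_smul, sub_smul, neg_smul]
        abel
    have hAn := hAk n
    rw [h, hodd.neg_one_pow, neg_one_smul, neg_one_mul, neg_smul, sub_neg_eq_add] at hAn
    have hnB : ((n : ℝ)) • B = 0 := by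
      have h3 : (-(1 : Matrix (Fin 2) (Fin 2) ℝ)) + 0 = -1 + (n : ℝ) • B := by
        rw [add_zero]; exact hAn
      exact (add_left_cancel h3).symm
    rcases smul_eq_zero.1 hnB with hn0 | hB0
    · have : (3 : ℝ) ≤ (n : ℝ) := by exact_mod_cast hn
      linarith
    · exact hBne hB0
  -- B invertible case
  have hgeom : (∑ j ∈ Finset.range n, ((-1 : ℝ) ^ j) • A ^ (n - 1 - j)) * B = 0 := by
    have hcomm : Commute A (-1 : Matrix (Fin 2) (Fin 2) ℝ) := by
      simp [Commute, SemiconjBy]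
    have hg := hcomm.geom_sum₂_mul n
    rw [sub_neg_eq_add, h, hodd.neg_one_pow, sub_neg_eq_add, neg_add_cancel] at hg
    have hsum : (∑ j ∈ Finset.range n, ((-1 : ℝ) ^ j) • A ^ (n - 1 - j))
        = ∑ i ∈ Finset.range n, A ^ i * (-1 : Matrix (Fin 2) (Fin 2) ℝ) ^ (n - 1 - i) := by
      rw [← Finset.sum_range_reflect
        (fun i => A ^ i * (-1 : Matrix (Fin 2) (Fin 2) ℝ) ^ (n - 1 - i)) n]
      refine Finset.sum_congr rfl fun j hj => ?_
      have hj' : j < n := Finset.mem_range.1 hj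
      have h1 : n - 1 - (n - 1 - j) = j := by omega
      rw [h1]
      rcases Nat.even_or_odd j with he | ho
      · rw [he.neg_one_pow, he.neg_one_pow, one_smul, mul_one]
      · rw [ho.neg_one_pow, ho.neg_one_pow, neg_one_smul, mul_neg_one]
    rw [hsum]
    exact hg
  obtain ⟨u, hu⟩ := hB
  calc ∑ j ∈ Finset.range n, ((-1 : ℝ) ^ j) • A ^ (n - 1 - j)
      = (∑ j ∈ Finset.range n, ((-1 : ℝ) ^ j) • A ^ (n - 1 - j)) * (↑u * ↑u⁻¹) := by
        rw [u.mul_inv, mul_one]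
    _ = ((∑ j ∈ Finset.range n, ((-1 : ℝ) ^ j) • A ^ (n - 1 - j)) * B) * ↑u⁻¹ := by
        rw [← mul_assoc, hu]
    _ = 0 := by rw [hgeom, zero_mul]
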